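/- Let M be a symmetric positive semidefinite real n×n matrix whose sparsity graph is acyclic (a forest). Then the matrix 2·Diag(M) − M is positive semidefinite. -/

import Mathlib

open Matrix

namespace ForestAux

open SimpleGraph SimpleGraph.Walk

variable {V : Type*} [DecidableEq V] {G : SimpleGraph V}

/-- In an acyclic graph, any walk has the same length parity as any path
between the same endpoints. -/
lemma parity_path (hG : G.IsAcyclic) :
    ∀ {u v : V} (p : G.Walk u v) (q : G.Walk u v), q.IsPath →
      p.length % 2 = q.length % 2 := by
  intro u v p
  induction p with
  | nil =>
    intro q hq
    rw [Walk.isPath_iff_eq_nil.mp hq]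
  | @cons u x v h p ih =>
    intro q hq
    by_cases hx : x ∈ q.support
    · have hspec := q.take_spec hx
      have ht : (q.takeUntil x hx).IsPath := hq.takeUntil hx
      have hd : (q.dropUntil x hx).IsPath := hq.dropUntil hx
      have hsingle : (⟨q.takeUntil x hx, ht⟩ : G.Path u x) = Path.singleton h :=
        hG.path_unique _ _
      have hlen1 : (q.takeUntil x hx).length = 1 := by
        have := congrArg (fun (P : G.Path u x) => P.1.length) hsingle
        simpa [Path.singleton] using this
      have hlen : (q.takeUntil x hx).length + (q.dropUntil x hx).length = q.length := by
        conv_rhs => rw [← hspec]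
        rw [Walk.length_append]
      have hih := ih (q.dropUntil x hx) hd
      simp only [Walk.length_cons]
      omega
    · have hq' : (Walk.cons h.symm q).IsPath := hq.cons hx
      have hih := ih (Walk.cons h.symm q) hq'
      simp only [Walk.length_cons] at hih ⊢
      omega

/-- In an acyclic graph, any two walks between the same endpoints have the
same length parity. -/
lemma parity_eq (hG : G.IsAcyclic) {u v : V} (p q : G.Walk u v) :
    p.length % 2 = q.length % 2 := by
  rw [parity_path hG p q.bypass q.bypass_isPath,
    parity_path hG q q.bypass q.bypass_isPath]

/-- An acyclic graph admits a proper 2-coloring. -/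
lemma exists_two_coloring (hG : G.IsAcyclic) :
    ∃ c : V → Bool, ∀ i j, G.Adj i j → c i ≠ c j := by
  classical
  have hroot : ∀ i : V, G.Reachable ((G.connectedComponentMk i).out) i := by
    intro i
    have : G.connectedComponentMk ((G.connectedComponentMk i).out)
        = G.connectedComponentMk i := (G.connectedComponentMk i).out_eq
    exact SimpleGraph.ConnectedComponent.exact this
  refine ⟨fun i => decide ((hroot i).some.length % 2 = 0), ?_⟩
  intro i j hadj
  have hcomp : G.connectedComponentMk i = G.connectedComponentMk j :=
    SimpleGraph.ConnectedComponent.sound hadj.reachable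
  have hrj : (G.connectedComponentMk j).out = (G.connectedComponentMk i).out := by
    rw [← hcomp]
  have key : ∀ (w : G.Walk ((G.connectedComponentMk i).out) j),
      ((hroot i).some.concat hadj).length % 2 = w.length % 2 := fun w => parity_eq hG _ _
  have key2 := key ((hroot j).some.copy hrj rfl)
  rw [Walk.length_concat, Walk.length_copy] at key2
  simp only [ne_eq, decide_eq_decide]
  omega

end ForestAux

/-- If a symmetric PSD real matrix `M` has an acyclic sparsity graph, then
`2·Diag(M) − M` is positive semidefinite. -/
theorem stmt1 {n : ℕ} (M : Matrix (Fin n) (Fin n) ℝ) (hM : M.IsSymm)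
    (hpsd : M.PosSemidef)
    (G : SimpleGraph (Fin n))
    (hG : ∀ i j, G.Adj i j ↔ i ≠ j ∧ M i j ≠ 0)
    (hforest : G.IsAcyclic) :
    ((2 : ℝ) • Matrix.diagonal (fun i => M i i) - M).PosSemidef := by
  classical
  obtain ⟨c, hc⟩ := ForestAux.exists_two_coloring hforest
  set s : Fin n → ℝ := fun i => if c i then 1 else -1 with hs
  have hS : ((2 : ℝ) • Matrix.diagonal (fun i => M i i) - M)
      = Matrix.diagonal s * M * Matrix.diagonal s := by
    ext i j
    rw [Matrix.mul_diagonal, Matrix.diagonal_mul]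
    by_cases hij : i = j
    · subst hij
      have : s i * s i = 1 := by by_cases h : c i <;> simp [hs, h]
      simp only [Matrix.sub_apply, Matrix.smul_apply, Matrix.diagonal_apply_eq, smul_eq_mul]
      rw [mul_comm (s i) (M i i), mul_assoc, this]
      ring
    · simp only [Matrix.sub_apply, Matrix.smul_apply, Matrix.diagonal_apply_ne _ hij,
        smul_eq_mul, mul_zero, zero_sub]
      by_cases hM0 : M i j = 0
      · simp [hM0]
      · have hadj : G.Adj i j := (hG i j).mpr ⟨hij, hM0⟩
        have hcij := hc i j hadj
        have : s i * s j = -1 := by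
          rcases Bool.eq_false_or_eq_true (c i) with h1 | h1 <;>
            rcases Bool.eq_false_or_eq_true (c j) with h2 | h2 <;>
            simp [hs, h1, h2] at hcij ⊢
        rw [mul_comm (s i) (M i j), mul_assoc, this]
        ring
  rw [hS]
  have hherm : (Matrix.diagonal s)ᴴ = Matrix.diagonal s := by
    simp [Matrix.conjTranspose, Matrix.diagonal_transpose]
  have := hpsd.conjTranspose_mul_mul_same (Matrix.diagonal s)
  rwa [hherm] at this
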